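/- Let P be a finite set of n players and T ⊆ P a set of byzantine players with |T| = t0 and 1 ≤ t0 ≤ n. If the agreement threshold τ satisfies τ ≤ ⌊(n + t0)/2⌋, then there exist disjoint sets A, B ⊆ P \ T with A ∪ B = P \ T such that |A| + t0 ≥ τ and |B| + t0 ≥ τ (so each partition together with the byzantine players reaches the agreement threshold, enabling agreement on two conflicting values). -/

import Mathlib

/-- Disagreement half of Claim 1 (byz-lim): if the agreement threshold `τ` is at
most `⌊(n + t0)/2⌋`, the non-byzantine players `P \ T` can be split into two
disjoint sets `A` and `B`, each of which together with the `t0` byzantine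
players reaches the threshold `τ`. -/
theorem fork_of_low_threshold {α : Type*} [DecidableEq α]
    (P T : Finset α) (n t0 τ : ℕ)
    (hTP : T ⊆ P) (hn : P.card = n) (ht : T.card = t0)
    (ht1 : 1 ≤ t0) (htn : t0 ≤ n)
    (hτ : τ ≤ (n + t0) / 2) :
    ∃ A B : Finset α, A ⊆ P \ T ∧ B ⊆ P \ T ∧ Disjoint A B ∧
      A ∪ B = P \ T ∧ A.card + t0 ≥ τ ∧ B.card + t0 ≥ τ := by
  have hcard : (P \ T).card = n - t0 := by
    rw [Finset.card_sdiff_of_subset hTP, hn, ht]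
  obtain ⟨A, hA, hAcard⟩ := Finset.exists_subset_card_eq (s := P \ T) (n := (n - t0) / 2)
    (by omega)
  refine ⟨A, (P \ T) \ A, hA, Finset.sdiff_subset, Finset.disjoint_sdiff, ?_, ?_, ?_⟩
  · exact Finset.union_sdiff_of_subset hA
  · have : τ ≤ (n - t0) / 2 + t0 := by omega
    omega
  · have hB : ((P \ T) \ A).card = (n - t0) - (n - t0) / 2 := by
      rw [Finset.card_sdiff_of_subset hA, hcard, hAcard]
    omega
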